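/- Let U ⊆ ℍ be open and let f : U → ℍ be given by f(x) = f₁(x₁,x₂,x₃,x₄)e₁ + ∑ₖ₌₂⁴ xₖ f₀(x₁,x₂,x₃,x₄)eₖ, where f₀, f₁ : ℝ⁴ → ℝ are C². If f is algebraic regular on U, then its quaternion derivative ∂f/∂x₁ : U → ℍ, which satisfies (∂f/∂x₁)(x) = (∂f₁/∂x₁)(x₁,x₂,x₃,x₄)e₁ + ∑ₖ₌₂⁴ xₖ (∂f₀/∂x₁)(x₁,x₂,x₃,x₄)eₖ, is also algebraic regular on U (with the C¹ functions ∂f₀/∂x₁ and ∂f₁/∂x₁ playing the roles of f₀ and f₁). -/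

import Mathlib

open scoped Quaternion

noncomputable section

/-- The standard basis `e₁ = 1, e₂ = i, e₃ = j, e₄ = k` of the quaternions. -/
def e : Fin 4 → ℍ[ℝ] := ![1, ⟨0,1,0,0⟩, ⟨0,0,1,0⟩, ⟨0,0,0,1⟩]

/-- The real coordinates of a quaternion. -/
def toTuple (x : ℍ[ℝ]) : Fin 4 → ℝ := ![x.re, x.imI, x.imJ, x.imK]
/-- The `i`-th partial derivative of a function `g : ℝ⁴ → ℝ`. -/
def pd (g : (Fin 4 → ℝ) → ℝ) (i : Fin 4) (p : Fin 4 → ℝ) : ℝ :=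
  fderiv ℝ g p (Pi.single i 1)

/-- `f` is given on `U` by `f(x) = f₁(x₁,x₂,x₃,x₄)e₁ + ∑ₖ₌₂⁴ xₖ f₀(x₁,x₂,x₃,x₄)eₖ`. -/
def Represents (f : ℍ[ℝ] → ℍ[ℝ]) (U : Set ℍ[ℝ]) (f₀ f₁ : (Fin 4 → ℝ) → ℝ) : Prop :=
  ∀ x ∈ U, f x = f₁ (toTuple x) • e 0 + (x.imI * f₀ (toTuple x)) • e 1 +
    (x.imJ * f₀ (toTuple x)) • e 2 + (x.imK * f₀ (toTuple x)) • e 3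

/-- The generalized Cauchy–Riemann equations (ii) of algebraic regularity, at `p ∈ ℝ⁴`. -/
def RegularEqs (f₀ f₁ : (Fin 4 → ℝ) → ℝ) (p : Fin 4 → ℝ) : Prop :=
  pd f₁ 0 p = f₀ p + p 1 * pd f₀ 1 p + p 2 * pd f₀ 2 p + p 3 * pd f₀ 3 p ∧
  (∀ i : Fin 4, i ≠ 0 → pd f₁ i p = -(p i * pd f₀ 0 p)) ∧
  (∀ i j : Fin 4, i ≠ 0 → j ≠ 0 → i ≠ j → p i * pd f₀ j p = p j * pd f₀ i p)

/-- `f` is algebraic regular at `c ∈ U`. -/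
def AlgebraicRegularAt (f : ℍ[ℝ] → ℍ[ℝ]) (U : Set ℍ[ℝ]) (c : ℍ[ℝ]) : Prop :=
  ∃ f₀ f₁ : (Fin 4 → ℝ) → ℝ, ContDiff ℝ 1 f₀ ∧ ContDiff ℝ 1 f₁ ∧
    Represents f U f₀ f₁ ∧ RegularEqs f₀ f₁ (toTuple c)

/-- `f` is algebraic regular on `U`. -/
def AlgebraicRegularOn (f : ℍ[ℝ] → ℍ[ℝ]) (U : Set ℍ[ℝ]) : Prop :=
  ∀ c ∈ U, AlgebraicRegularAt f U c

/-! ### Auxiliary material -/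

abbrev E4 := Fin 4 → ℝ

/-- `toTuple` as a continuous linear map. -/
def T : ℍ[ℝ] →L[ℝ] E4 :=
  LinearMap.toContinuousLinearMap (QuaternionAlgebra.linearEquivTuple (-1:ℝ) 0 (-1)).toLinearMap

/-- The inverse of `T`. -/
def Tinv : E4 → ℍ[ℝ] := ⇑(QuaternionAlgebra.linearEquivTuple (-1:ℝ) 0 (-1)).symm

lemma toTuple_eq_T : toTuple = ⇑T := by
  funext x i
  fin_cases i <;>
    simp [toTuple, T, QuaternionAlgebra.linearEquivTuple, QuaternionAlgebra.equivTuple] <;> rfl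

lemma T_e0 : T (e 0) = Pi.single 0 1 := by
  rw [← toTuple_eq_T]; funext i
  fin_cases i <;> simp [toTuple, e, Pi.single_apply]

lemma T1 (x : ℍ[ℝ]) : T x 1 = x.imI := by rw [← toTuple_eq_T]; simp [toTuple]
lemma T2 (x : ℍ[ℝ]) : T x 2 = x.imJ := by rw [← toTuple_eq_T]; simp [toTuple]
lemma T3 (x : ℍ[ℝ]) : T x 3 = x.imK := by rw [← toTuple_eq_T]; simp [toTuple]

lemma T_Tinv (p : E4) : T (Tinv p) = p := by
  show (QuaternionAlgebra.linearEquivTuple (-1:ℝ) 0 (-1)).toLinearMap _ = p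
  simp only [Tinv, LinearEquiv.coe_coe, LinearEquiv.apply_symm_apply]

lemma Tinv_T (x : ℍ[ℝ]) : Tinv (T x) = x := by
  show (QuaternionAlgebra.linearEquivTuple (-1:ℝ) 0 (-1)).symm
    ((QuaternionAlgebra.linearEquivTuple (-1:ℝ) 0 (-1)).toLinearMap x) = x
  exact (QuaternionAlgebra.linearEquivTuple (-1:ℝ) 0 (-1)).symm_apply_apply x

lemma Tinv_continuous : Continuous Tinv := by
  let Λ : E4 →ₗ[ℝ] ℍ[ℝ] := (QuaternionAlgebra.linearEquivTuple (-1:ℝ) 0 (-1)).symm.toLinearMap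
  exact Λ.continuous_of_finiteDimensional

lemma single_ne {i : Fin 4} (hi : i ≠ 0) : (Pi.single 0 1 : E4) i = 0 :=
  Pi.single_eq_of_ne hi 1

lemma components_ext {a b c d a' b' c' d' : ℝ}
    (h : a • e 0 + b • e 1 + c • e 2 + d • e 3 = a' • e 0 + b' • e 1 + c' • e 2 + d' • e 3) :
    a = a' ∧ b = b' ∧ c = c' ∧ d = d' := by
  refine ⟨?_, ?_, ?_, ?_⟩
  · have := congrArg QuaternionAlgebra.re h
    change a * 1 + b * 0 + c * 0 + d * 0 = a' * 1 + b' * 0 + c' * 0 + d' * 0 at this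
    simpa using this
  · have := congrArg QuaternionAlgebra.imI h
    change a * 0 + b * 1 + c * 0 + d * 0 = a' * 0 + b' * 1 + c' * 0 + d' * 0 at this
    simpa using this
  · have := congrArg QuaternionAlgebra.imJ h
    change a * 0 + b * 0 + c * 1 + d * 0 = a' * 0 + b' * 0 + c' * 1 + d' * 0 at this
    simpa using this
  · have := congrArg QuaternionAlgebra.imK h
    change a * 0 + b * 0 + c * 0 + d * 1 = a' * 0 + b' * 0 + c' * 0 + d' * 1 at this
    simpa using this

/-! ### Calculus of partial derivatives -/

lemma pd_contDiff {g : E4 → ℝ} (hg : ContDiff ℝ 2 g) (i : Fin 4) : ContDiff ℝ 1 (pd g i) :=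
  (hg.fderiv_right (m := 1) le_rfl).clm_apply (contDiff_const (c := Pi.single i 1))

lemma pd_continuous {g : E4 → ℝ} (hg : ContDiff ℝ 1 g) (i : Fin 4) : Continuous (pd g i) :=
  (ContinuousLinearMap.apply ℝ ℝ (Pi.single i 1)).continuous.comp
    (hg.continuous_fderiv one_ne_zero)

lemma pd_congr {A B : E4 → ℝ} {W : Set E4} (hW : IsOpen W) {p : E4} (hp : p ∈ W)
    (h : ∀ q ∈ W, A q = B q) (i : Fin 4) : pd A i p = pd B i p := by
  unfold pd
  rw [Filter.EventuallyEq.fderiv_eq (Filter.eventuallyEq_of_mem (hW.mem_nhds hp) h)]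

lemma pd_add {A B : E4 → ℝ} {p : E4} (hA : DifferentiableAt ℝ A p) (hB : DifferentiableAt ℝ B p)
    (i : Fin 4) : pd (fun q => A q + B q) i p = pd A i p + pd B i p := by
  unfold pd; rw [fderiv_fun_add hA hB]; simp

lemma pd_mul {A B : E4 → ℝ} {p : E4} (hA : DifferentiableAt ℝ A p) (hB : DifferentiableAt ℝ B p)
    (i : Fin 4) : pd (fun q => A q * B q) i p = A p * pd B i p + B p * pd A i p := by
  unfold pd; rw [fderiv_fun_mul hA hB]; simp

lemma pd_neg {A : E4 → ℝ} {p : E4} (i : Fin 4) :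
    pd (fun q => -(A q)) i p = -(pd A i p) := by
  unfold pd; rw [fderiv_fun_neg]; simp

lemma pd_coord (j i : Fin 4) (p : E4) : pd (fun q => q j) i p = (Pi.single i 1 : E4) j := by
  unfold pd
  have : fderiv ℝ (fun q : E4 => q j) p = ContinuousLinearMap.proj j :=
    (ContinuousLinearMap.proj j : E4 →L[ℝ] ℝ).fderiv
  rw [this]; rfl

lemma diff_coord (j : Fin 4) (p : E4) : DifferentiableAt ℝ (fun q : E4 => q j) p :=
  (ContinuousLinearMap.proj j : E4 →L[ℝ] ℝ).differentiableAt

lemma pd_pd_symm {g : E4 → ℝ} (hg : ContDiff ℝ 2 g) (i j : Fin 4) (p : E4) :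
    pd (pd g i) j p = pd (pd g j) i p := by
  have hdiff : Differentiable ℝ g := hg.differentiable (by norm_num)
  have hf' : ContDiff ℝ 1 (fderiv ℝ g) := hg.fderiv_right (m := 1) le_rfl
  have hx : HasFDerivAt (fderiv ℝ g) (fderiv ℝ (fderiv ℝ g) p) p :=
    (hf'.differentiable one_ne_zero p).hasFDerivAt
  have symm := second_derivative_symmetric (fun y => (hdiff y).hasFDerivAt) hx
  have key : ∀ i j : Fin 4, pd (pd g i) j p
      = fderiv ℝ (fderiv ℝ g) p (Pi.single j 1) (Pi.single i 1) := by
    intro i j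
    unfold pd
    rw [fderiv_clm_apply (hf'.differentiable one_ne_zero p) (differentiableAt_const _)]
    simp
  rw [key, key, symm]

/-! ### The derivative of a represented function -/

open ContinuousLinearMap in
lemma fderiv_rep (U : Set ℍ[ℝ]) (hU : IsOpen U) (f : ℍ[ℝ] → ℍ[ℝ]) (f₀ f₁ : E4 → ℝ)
    (hf₀ : ContDiff ℝ 2 f₀) (hf₁ : ContDiff ℝ 2 f₁) (hf : Represents f U f₀ f₁)
    {x : ℍ[ℝ]} (hx : x ∈ U) :
    fderiv ℝ f x (e 0) = pd f₁ 0 (toTuple x) • e 0 +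
      (x.imI * pd f₀ 0 (toTuple x)) • e 1 + (x.imJ * pd f₀ 0 (toTuple x)) • e 2 +
      (x.imK * pd f₀ 0 (toTuple x)) • e 3 := by
  set F : ℍ[ℝ] → ℍ[ℝ] := fun y => f₁ (T y) • e 0 + ((T y 1) * f₀ (T y)) • e 1 +
      ((T y 2) * f₀ (T y)) • e 2 + ((T y 3) * f₀ (T y)) • e 3 with hF
  have hev : f =ᶠ[nhds x] F := by
    apply Filter.eventuallyEq_of_mem (hU.mem_nhds hx)
    intro y hy
    rw [hf y hy, hF]
    simp [← toTuple_eq_T, toTuple]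
  have h1 : HasFDerivAt (fun y => f₁ (T y)) ((fderiv ℝ f₁ (T x)).comp T) x :=
    HasFDerivAt.comp x (hf₁.differentiable (by norm_num) (T x)).hasFDerivAt T.hasFDerivAt
  have h0 : HasFDerivAt (fun y => f₀ (T y)) ((fderiv ℝ f₀ (T x)).comp T) x :=
    HasFDerivAt.comp x (hf₀.differentiable (by norm_num) (T x)).hasFDerivAt T.hasFDerivAt
  have hc : ∀ i : Fin 4, HasFDerivAt (fun y => T y i) ((proj i : E4 →L[ℝ] ℝ).comp T) x :=
    fun i => ((proj i : E4 →L[ℝ] ℝ).comp T).hasFDerivAt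
  have hD : HasFDerivAt F
      (((fderiv ℝ f₁ (T x)).comp T).smulRight (e 0) +
        ((T x 1) • ((fderiv ℝ f₀ (T x)).comp T) + f₀ (T x) • ((proj 1 : E4 →L[ℝ] ℝ).comp T)).smulRight (e 1) +
        ((T x 2) • ((fderiv ℝ f₀ (T x)).comp T) + f₀ (T x) • ((proj 2 : E4 →L[ℝ] ℝ).comp T)).smulRight (e 2) +
        ((T x 3) • ((fderiv ℝ f₀ (T x)).comp T) + f₀ (T x) • ((proj 3 : E4 →L[ℝ] ℝ).comp T)).smulRight (e 3)) x := by
    exact ((((h1.smul_const (e 0)).add (((hc 1).mul h0).smul_const (e 1))).add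
      (((hc 2).mul h0).smul_const (e 2))).add (((hc 3).mul h0).smul_const (e 3)))
  have := (hD.congr_of_eventuallyEq hev).fderiv
  rw [this]
  simp only [ContinuousLinearMap.add_apply, ContinuousLinearMap.smulRight_apply,
    ContinuousLinearMap.coe_comp', Function.comp_apply, ContinuousLinearMap.coe_smul',
    Pi.add_apply, Pi.smul_apply, ContinuousLinearMap.proj_apply, T_e0, smul_eq_mul]
  rw [toTuple_eq_T]
  unfold pd
  simp [T1, T2, T3, Pi.single_apply]

/-- if `f₀, f₁` are `C²` and `f` is algebraic regular on `U`, then the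
quaternion derivative `∂f/∂x₁`, which is represented by `∂f₀/∂x₁` and `∂f₁/∂x₁`,
is also algebraic regular on `U`. -/
theorem algebraicRegularOn_quaternionDeriv (U : Set ℍ[ℝ]) (hU : IsOpen U)
    (f : ℍ[ℝ] → ℍ[ℝ]) (f₀ f₁ : (Fin 4 → ℝ) → ℝ)
    (hf₀ : ContDiff ℝ 2 f₀) (hf₁ : ContDiff ℝ 2 f₁)
    (hf : Represents f U f₀ f₁)
    (hreg : AlgebraicRegularOn f U) :
    Represents (fun x => fderiv ℝ f x (e 0)) U (pd f₀ 0) (pd f₁ 0) ∧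
    AlgebraicRegularOn (fun x => fderiv ℝ f x (e 0)) U := by
  have hrep : Represents (fun x => fderiv ℝ f x (e 0)) U (pd f₀ 0) (pd f₁ 0) := by
    intro x hx
    exact fderiv_rep U hU f f₀ f₁ hf₀ hf₁ hf hx
  refine ⟨hrep, ?_⟩
  -- the open sets V and W
  set V : Set E4 := Tinv ⁻¹' U with hV
  have hVopen : IsOpen V := hU.preimage Tinv_continuous
  set L : Set E4 := {p | p 1 ≠ 0 ∨ p 2 ≠ 0 ∨ p 3 ≠ 0} with hL
  have hLopen : IsOpen L := by
    have : L = ((fun p : E4 => p 1) ⁻¹' {(0:ℝ)}ᶜ) ∪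
        (((fun p : E4 => p 2) ⁻¹' {(0:ℝ)}ᶜ) ∪ ((fun p : E4 => p 3) ⁻¹' {(0:ℝ)}ᶜ)) := rfl
    rw [this]
    exact ((isOpen_compl_singleton.preimage (continuous_apply 1)).union
      ((isOpen_compl_singleton.preimage (continuous_apply 2)).union
        (isOpen_compl_singleton.preimage (continuous_apply 3))))
  set W : Set E4 := V ∩ L with hWdef
  have hWopen : IsOpen W := hVopen.inter hLopen
  have hTmemV : ∀ {x : ℍ[ℝ]}, x ∈ U → toTuple x ∈ V := by
    intro x hx
    show Tinv (toTuple x) ∈ U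
    rw [toTuple_eq_T, Tinv_T]
    exact hx
  -- the regularity equations for f₀, f₁ hold on W
  have hregW : ∀ p ∈ W, RegularEqs f₀ f₁ p := by
    rintro p ⟨hpV, hpL⟩
    set c := Tinv p with hc
    have hcU : c ∈ U := hpV
    have hTc : toTuple c = p := by rw [toTuple_eq_T, hc, T_Tinv]
    obtain ⟨g₀, g₁, hg₀, hg₁, hgrep, hgeq⟩ := hreg c hcU
    rw [hTc] at hgeq
    have hcomp : ∀ q ∈ V, f₁ q = g₁ q ∧ (q 1 * f₀ q = q 1 * g₀ q ∧
        q 2 * f₀ q = q 2 * g₀ q ∧ q 3 * f₀ q = q 3 * g₀ q) := by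
      intro q hq
      set y := Tinv q with hy
      have hyU : y ∈ U := hq
      have hTy : toTuple y = q := by rw [toTuple_eq_T, hy, T_Tinv]
      have heq := (hf y hyU).symm.trans (hgrep y hyU)
      obtain ⟨h1, h2, h3, h4⟩ := components_ext heq
      rw [hTy] at h1 h2 h3 h4
      have hy1 : y.imI = q 1 := by rw [← hTy]; simp [toTuple]
      have hy2 : y.imJ = q 2 := by rw [← hTy]; simp [toTuple]
      have hy3 : y.imK = q 3 := by rw [← hTy]; simp [toTuple]
      rw [hy1] at h2; rw [hy2] at h3; rw [hy3] at h4
      exact ⟨h1, h2, h3, h4⟩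
    have hf₁g₁ : ∀ q ∈ V, f₁ q = g₁ q := fun q hq => (hcomp q hq).1
    have hf₀g₀ : ∀ q ∈ W, f₀ q = g₀ q := by
      rintro q ⟨hqV, hqL⟩
      obtain ⟨-, h2, h3, h4⟩ := hcomp q hqV
      rcases hqL with h | h | h
      · exact mul_left_cancel₀ h h2
      · exact mul_left_cancel₀ h h3
      · exact mul_left_cancel₀ h h4
    have hpdf₁ : ∀ i, pd f₁ i p = pd g₁ i p := fun i => pd_congr hVopen hpV hf₁g₁ i
    have hpdf₀ : ∀ i, pd f₀ i p = pd g₀ i p := fun i => pd_congr hWopen ⟨hpV, hpL⟩ hf₀g₀ i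
    have hval : f₀ p = g₀ p := hf₀g₀ p ⟨hpV, hpL⟩
    obtain ⟨ea, eb, ec⟩ := hgeq
    refine ⟨?_, ?_, ?_⟩
    · rw [hpdf₁ 0, hpdf₀ 1, hpdf₀ 2, hpdf₀ 3, hval]; exact ea
    · intro i hi; rw [hpdf₁ i, hpdf₀ 0]; exact eb i hi
    · intro i j hi hj hij; rw [hpdf₀ i, hpdf₀ j]; exact ec i j hi hj hij
  -- differentiability facts
  have d0 : ∀ q, DifferentiableAt ℝ f₀ q := fun q => hf₀.differentiable (by norm_num) q
  have dpd0 : ∀ (i : Fin 4) (q : E4), DifferentiableAt ℝ (pd f₀ i) q :=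
    fun i q => (pd_contDiff hf₀ i).differentiable one_ne_zero q
  have dm : ∀ (i j : Fin 4) (q : E4), DifferentiableAt ℝ (fun q : E4 => q i * pd f₀ j q) q :=
    fun i j q => (diff_coord i q).mul (dpd0 j q)
  -- the regularity equations for the derivatives hold on W
  have hregW' : ∀ p ∈ W, RegularEqs (pd f₀ 0) (pd f₁ 0) p := by
    intro p hp
    refine ⟨?_, ?_, ?_⟩
    · have h := pd_congr (A := pd f₁ 0)
        (B := fun q => f₀ q + q 1 * pd f₀ 1 q + q 2 * pd f₀ 2 q + q 3 * pd f₀ 3 q)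
        hWopen hp (fun q hq => (hregW q hq).1) 0
      rw [pd_add (A := fun q => f₀ q + q 1 * pd f₀ 1 q + q 2 * pd f₀ 2 q)
            (B := fun q => q 3 * pd f₀ 3 q) (((d0 p).add (dm 1 1 p)).add (dm 2 2 p)) (dm 3 3 p) 0,
          pd_add (A := fun q => f₀ q + q 1 * pd f₀ 1 q) (B := fun q => q 2 * pd f₀ 2 q)
            ((d0 p).add (dm 1 1 p)) (dm 2 2 p) 0,
          pd_add (A := f₀) (B := fun q => q 1 * pd f₀ 1 q) (d0 p) (dm 1 1 p) 0,
          pd_mul (A := fun q : E4 => q 1) (B := pd f₀ 1) (diff_coord 1 p) (dpd0 1 p) 0,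
          pd_mul (A := fun q : E4 => q 2) (B := pd f₀ 2) (diff_coord 2 p) (dpd0 2 p) 0,
          pd_mul (A := fun q : E4 => q 3) (B := pd f₀ 3) (diff_coord 3 p) (dpd0 3 p) 0,
          pd_coord 1 0 p, pd_coord 2 0 p, pd_coord 3 0 p] at h
      simp only [single_ne (show (1 : Fin 4) ≠ 0 by decide),
        single_ne (show (2 : Fin 4) ≠ 0 by decide),
        single_ne (show (3 : Fin 4) ≠ 0 by decide), mul_zero, add_zero] at h
      rw [pd_pd_symm hf₀ 0 1 p, pd_pd_symm hf₀ 0 2 p, pd_pd_symm hf₀ 0 3 p]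
      linear_combination h
    · intro i hi
      have h := pd_congr (A := pd f₁ i) (B := fun q => -(q i * pd f₀ 0 q))
        hWopen hp (fun q hq => (hregW q hq).2.1 i hi) 0
      rw [pd_neg (A := fun q : E4 => q i * pd f₀ 0 q),
          pd_mul (A := fun q : E4 => q i) (B := pd f₀ 0) (diff_coord i p) (dpd0 0 p) 0,
          pd_coord i 0 p] at h
      rw [single_ne hi, mul_zero, add_zero] at h
      rw [pd_pd_symm hf₁ 0 i p, pd_pd_symm hf₀ 0 0 p]
      linear_combination h
    · intro i j hi hj hij
      have h := pd_congr (A := fun q : E4 => q i * pd f₀ j q)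
        (B := fun q : E4 => q j * pd f₀ i q)
        hWopen hp (fun q hq => (hregW q hq).2.2 i j hi hj hij) 0
      rw [pd_mul (A := fun q : E4 => q i) (B := pd f₀ j) (diff_coord i p) (dpd0 j p) 0,
          pd_mul (A := fun q : E4 => q j) (B := pd f₀ i) (diff_coord j p) (dpd0 i p) 0,
          pd_coord i 0 p, pd_coord j 0 p,
          single_ne hi, single_ne hj] at h
      simp only [mul_zero, add_zero] at h
      rw [pd_pd_symm hf₀ 0 j p, pd_pd_symm hf₀ 0 i p]
      linear_combination h
  -- every point of `toTuple '' U` is in the closure of W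
  have hclos : ∀ c ∈ U, toTuple c ∈ closure W := by
    intro c hc
    by_cases hcL : toTuple c ∈ L
    · exact subset_closure ⟨hTmemV hc, hcL⟩
    · have h1 : toTuple c 1 = 0 := by
        simp only [hL, Set.mem_setOf_eq, not_or, not_not] at hcL
        exact hcL.1
      rw [mem_closure_iff_nhds]
      intro N hN
      have hNV : N ∩ V ∈ nhds (toTuple c) := Filter.inter_mem hN (hVopen.mem_nhds (hTmemV hc))
      obtain ⟨ε, hε, hball⟩ := Metric.mem_nhds_iff.1 hNV
      set q : E4 := toTuple c + (ε/2) • (Pi.single 1 1 : E4) with hq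
      have key : ∀ i, q i = toTuple c i + (ε/2) * (Pi.single 1 1 : E4) i := by
        intro i; simp [hq]
      have hqball : q ∈ Metric.ball (toTuple c) ε := by
        rw [Metric.mem_ball, dist_pi_lt_iff hε]
        intro i
        have h1le : |(Pi.single 1 (1:ℝ) : E4) i| ≤ 1 := by
          rw [Pi.single_apply]
          split_ifs <;> simp
        have hd : dist (q i) (toTuple c i) = |(ε/2) * (Pi.single 1 1 : E4) i| := by
          rw [Real.dist_eq, key i]
          congr 1
          ring
        rw [hd, abs_mul]
        have hh : |ε/2| = ε/2 := abs_of_pos (by linarith)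
        nlinarith [abs_nonneg ((ε/2) : ℝ)]
      have hqNV := hball hqball
      refine ⟨q, hqNV.1, hqNV.2, Or.inl ?_⟩
      show q 1 ≠ 0
      have : q 1 = ε/2 := by rw [key 1]; simp [h1]
      rw [this]
      exact ne_of_gt (by linarith)
  -- continuity of the relevant functions
  have cpd00 : Continuous (pd f₀ 0) := pd_continuous (hf₀.of_le (by norm_num)) 0
  have cpd : ∀ i, Continuous (pd (pd f₀ 0) i) := fun i => pd_continuous (pd_contDiff hf₀ 0) i
  have cpd1 : ∀ i, Continuous (pd (pd f₁ 0) i) := fun i => pd_continuous (pd_contDiff hf₁ 0) i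
  have ccoord : ∀ i : Fin 4, Continuous (fun p : E4 => p i) := fun i => continuous_apply i
  have ext0 : ∀ {G H : E4 → ℝ}, Continuous G → Continuous H → (∀ q ∈ W, G q = H q) →
      ∀ p ∈ closure W, G p = H p := by
    intro G H hG hH hGH p hp
    exact closure_minimal (fun q hq => hGH q hq) (isClosed_eq hG hH) hp
  -- conclusion
  intro c hc
  refine ⟨pd f₀ 0, pd f₁ 0, pd_contDiff hf₀ 0, pd_contDiff hf₁ 0, hrep, ?_, ?_, ?_⟩
  · exact ext0 (cpd1 0)
      (((cpd00.add ((ccoord 1).mul (cpd 1))).add ((ccoord 2).mul (cpd 2))).add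
        ((ccoord 3).mul (cpd 3)))
      (fun q hq => (hregW' q hq).1) (toTuple c) (hclos c hc)
  · intro i hi
    exact ext0 (cpd1 i) (((ccoord i).mul (cpd 0)).neg)
      (fun q hq => (hregW' q hq).2.1 i hi) (toTuple c) (hclos c hc)
  · intro i j hi hj hij
    exact ext0 ((ccoord i).mul (cpd j)) ((ccoord j).mul (cpd i))
      (fun q hq => (hregW' q hq).2.2 i j hi hj hij) (toTuple c) (hclos c hc)
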